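/- Let e : ZFSet ≃ ZFSet be a permutation of the universe of ZFC sets that fixes every finite set, i.e., e s = s whenever s.toSet is finite. Then for all Q M N : ZFSet, the π-translation of 'Q is a binary relation between M and N' holds if and only if e Q ⊆ (e M).prod (e N); explicitly: (for every z ∈ e Q there exist x ∈ e M and y ∈ e N with z = e.symm {e.symm {x}, e.symm {x, y}}) if and only if e Q is a subset of the Cartesian product ZFSet.prod (e M) (e N). -/

import Mathlib

/-- **Lemma 3.4(ii)**: If a permutation `e` of the universe of ZFC sets fixes every
finite set, then the π-translation of "`Q` is a binary relation between `M` and `N`"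
holds iff `e Q ⊆ (e M) × (e N)`. -/
theorem pi_binary_relation_absolute (e : ZFSet ≃ ZFSet)
    (he : ∀ s : ZFSet, s.toSet.Finite → e s = s) :
    ∀ Q M N : ZFSet,
      (∀ z ∈ e Q, ∃ x ∈ e M, ∃ y ∈ e N, z = e.symm {e.symm {x}, e.symm {x, y}}) ↔
        e Q ⊆ ZFSet.prod (e M) (e N) := by
  have hsymm : ∀ s : ZFSet, s.toSet.Finite → e.symm s = s := by
    intro s hs
    conv_lhs => rw [← he s hs]
    exact e.symm_apply_apply s
  have hfin1 : ∀ x : ZFSet, ({x} : ZFSet).toSet.Finite := by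
    intro x
    exact (ZFSet.coe_singleton x ▸ Set.finite_singleton x : ((({x} : ZFSet)) : Set ZFSet).Finite)
  have hfin2 : ∀ x y : ZFSet, ({x, y} : ZFSet).toSet.Finite := by
    intro x y
    have : ({x, y} : ZFSet).toSet = {x, y} := by
      ext z; exact ZFSet.mem_pair
    rw [this]
    exact (Set.finite_singleton y).insert x
  have key : ∀ x y : ZFSet,
      e.symm ({e.symm {x}, e.symm {x, y}} : ZFSet) = ZFSet.pair x y := by
    intro x y
    rw [hsymm _ (hfin1 x), hsymm _ (hfin2 x y)]
    exact hsymm _ (hfin2 _ _)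
  intro Q M N
  constructor
  · intro h z hz
    obtain ⟨x, hx, y, hy, hzeq⟩ := h z hz
    rw [ZFSet.mem_prod]
    exact ⟨x, hx, y, hy, by rw [hzeq, key]⟩
  · intro h z hz
    obtain ⟨x, hx, y, hy, hzeq⟩ := (ZFSet.mem_prod).mp (h hz)
    exact ⟨x, hx, y, hy, by rw [hzeq, key]⟩
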